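/- The matrix of commuting times of an ergodic finite Markov chain is realizable as squared Euclidean distances: there exist points x_1,...,x_n in some Euclidean space ℝ^d with ‖x_a − x_b‖² = T_{ab} for all states a, b. -/

import Mathlib

open Matrix Finset

namespace CommuteTimeAux

variable {n : ℕ}

lemma pow_entry_nonneg (P : Matrix (Fin n) (Fin n) ℝ) (hP0 : ∀ i j, 0 ≤ P i j) :
    ∀ (k : ℕ) (i j : Fin n), 0 ≤ (P ^ k) i j := by
  intro k
  induction k with
  | zero =>
    intro i j
    rw [pow_zero]
    by_cases h : i = j <;> simp [Matrix.one_apply, h]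
  | succ k ih =>
    intro i j
    rw [pow_succ, Matrix.mul_apply]
    exact Finset.sum_nonneg fun l _ => mul_nonneg (ih i l) (hP0 l j)

lemma pow_row_sum (P : Matrix (Fin n) (Fin n) ℝ) (hP1 : ∀ i, ∑ j, P i j = 1) :
    ∀ (k : ℕ) (i : Fin n), ∑ j, (P ^ k) i j = 1 := by
  intro k
  induction k with
  | zero => intro i; simp [Matrix.one_apply]
  | succ k ih =>
    intro i
    rw [pow_succ]
    simp only [Matrix.mul_apply]
    rw [Finset.sum_comm]
    simp only [← Finset.mul_sum, hP1, mul_one]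
    exact ih i

/-- Maximum principle: a fixed vector of a strictly positive row-stochastic matrix
is constant. -/
lemma const_of_fixed (hn : 0 < n) (Q : Matrix (Fin n) (Fin n) ℝ)
    (hQpos : ∀ i j, 0 < Q i j) (hQ1 : ∀ i, ∑ j, Q i j = 1)
    (y : Fin n → ℝ) (hy : ∀ i, ∑ j, Q i j * y j = y i) :
    ∀ i j, y i = y j := by
  have hne : (Finset.univ : Finset (Fin n)).Nonempty := ⟨⟨0, hn⟩, Finset.mem_univ _⟩
  obtain ⟨i0, -, hi0⟩ := Finset.exists_max_image Finset.univ y hne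
  have key : ∀ j, y j = y i0 := by
    intro j
    have h1 : ∑ l, Q i0 l * (y i0 - y l) = 0 := by
      simp only [mul_sub, Finset.sum_sub_distrib, ← Finset.sum_mul, hQ1, hy i0, one_mul,
        sub_self]
    have h2 : ∀ l ∈ Finset.univ, 0 ≤ Q i0 l * (y i0 - y l) :=
      fun l _ => mul_nonneg (hQpos i0 l).le (sub_nonneg.mpr (hi0 l (Finset.mem_univ l)))
    have h3 := (Finset.sum_eq_zero_iff_of_nonneg h2).mp h1 j (Finset.mem_univ j)
    have h4 : y i0 - y j = 0 := by
      rcases mul_eq_zero.mp h3 with h | h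
      · exact absurd h (hQpos i0 j).ne'
      · exact h
    linarith
  intro i j
  rw [key i, key j]

/-- Existence of a positive stationary distribution for an ergodic chain. -/
lemma exists_stationary (hn : 0 < n) (P : Matrix (Fin n) (Fin n) ℝ)
    (hP0 : ∀ i j, 0 ≤ P i j) (hP1 : ∀ i, ∑ j, P i j = 1)
    (herg : ∃ k : ℕ, ∀ i j, 0 < (P ^ k) i j) :
    ∃ π : Fin n → ℝ, (∀ i, 0 < π i) ∧ (∑ i, π i = 1) ∧ (∀ j, ∑ i, π i * P i j = π j) := by
  classical
  obtain ⟨k0, hk0⟩ := herg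
  -- upgrade to a positive exponent
  set k : ℕ := k0 + 1 with hkdef
  have hkpos : 0 < k := Nat.succ_pos _
  have hrowpos : ∀ i : Fin n, ∃ l, 0 < P i l := by
    intro i
    by_contra h
    push_neg at h
    have h0 : ∑ l, P i l = 0 :=
      Finset.sum_eq_zero fun l _ => le_antisymm (h l) (hP0 i l)
    rw [hP1 i] at h0
    norm_num at h0
  have hQpos : ∀ i j, 0 < (P ^ k) i j := by
    intro i j
    rw [hkdef, pow_succ', Matrix.mul_apply]
    obtain ⟨l, hl⟩ := hrowpos i
    refine Finset.sum_pos' (fun m _ => mul_nonneg (hP0 i m) (pow_entry_nonneg P hP0 k0 m j))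
      ⟨l, Finset.mem_univ l, mul_pos hl (hk0 l j)⟩
  set Q := P ^ k with hQdef
  have hQ1 : ∀ i, ∑ j, Q i j = 1 := pow_row_sum P hP1 k
  -- a nonzero left fixed vector of P
  have hdet : (1 - P).det = 0 := by
    rw [← Matrix.exists_mulVec_eq_zero_iff]
    refine ⟨fun _ => 1, ?_, ?_⟩
    · intro h
      have := congrFun h ⟨0, hn⟩
      norm_num at this
    · funext i
      have h1 : ∑ x : Fin n, (1 : Matrix (Fin n) (Fin n) ℝ) i x = 1 := by
        simp [Matrix.one_apply]
      simp [Matrix.sub_mulVec, Matrix.one_mulVec, Matrix.mulVec, dotProduct, hP1 i, h1]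
  have hdetT : ((1 - P)ᵀ).det = 0 := by rw [Matrix.det_transpose]; exact hdet
  obtain ⟨v, hv0, hv⟩ := Matrix.exists_mulVec_eq_zero_iff.mpr hdetT
  have hvP : v ᵥ* P = v := by
    rw [Matrix.mulVec_transpose] at hv
    have h1 : v ᵥ* 1 - v ᵥ* P = 0 := by
      rw [← Matrix.vecMul_sub]; exact hv
    rw [Matrix.vecMul_one] at h1
    funext j
    have := congrFun h1 j
    simp only [Pi.sub_apply, Pi.zero_apply] at this
    linarith
  have hvpow : ∀ m : ℕ, v ᵥ* (P ^ m) = v := by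
    intro m
    induction m with
    | zero => simp
    | succ m ih => rw [pow_succ, ← Matrix.vecMul_vecMul, ih, hvP]
  -- w = |v| is fixed by Q
  set w : Fin n → ℝ := fun i => |v i| with hwdef
  have hle : ∀ j, w j ≤ ∑ i, w i * Q i j := by
    intro j
    have h1 : v j = ∑ i, v i * Q i j := by
      have := congrFun (hvpow k) j
      simpa [Matrix.vecMul, dotProduct] using this.symm
    calc w j = |∑ i, v i * Q i j| := by rw [hwdef]; simp only; rw [← h1]
      _ ≤ ∑ i, |v i * Q i j| := Finset.abs_sum_le_sum_abs _ _
      _ = ∑ i, w i * Q i j := by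
          refine Finset.sum_congr rfl fun i _ => ?_
          rw [abs_mul, abs_of_pos (hQpos i j)]
  have hsums : ∑ j, w j = ∑ j, ∑ i, w i * Q i j := by
    rw [Finset.sum_comm]
    simp only [← Finset.mul_sum, hQ1, mul_one]
  have heq : ∀ j, w j = ∑ i, w i * Q i j :=
    fun j => (Finset.sum_eq_sum_iff_of_le (fun j _ => hle j)).mp hsums j (Finset.mem_univ j)
  have hwQ : w ᵥ* Q = w := by
    funext j
    simp only [Matrix.vecMul, dotProduct]
    exact (heq j).symm
  have hwnonneg : ∀ i, 0 ≤ w i := fun i => abs_nonneg _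
  have hwsumpos : 0 < ∑ i, w i := by
    have : ∃ i, v i ≠ 0 := by
      by_contra h
      push_neg at h
      exact hv0 (funext h)
    obtain ⟨i, hi⟩ := this
    exact Finset.sum_pos' (fun i _ => hwnonneg i) ⟨i, Finset.mem_univ i, abs_pos.mpr hi⟩
  -- Cesàro average p of w under P is stationary for P
  set p : Fin n → ℝ := fun j => ∑ i ∈ Finset.range k, (w ᵥ* (P ^ i)) j with hpdef
  have hwPi_nonneg : ∀ (i : ℕ) (j : Fin n), 0 ≤ (w ᵥ* (P ^ i)) j := by
    intro i j
    simp only [Matrix.vecMul, dotProduct]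
    exact Finset.sum_nonneg fun l _ => mul_nonneg (hwnonneg l) (pow_entry_nonneg P hP0 i l j)
  have hpnonneg : ∀ j, 0 ≤ p j :=
    fun j => Finset.sum_nonneg fun i _ => hwPi_nonneg i j
  have hpP : p ᵥ* P = p := by
    have hswap : ∀ j, (p ᵥ* P) j = ∑ i ∈ Finset.range k, (w ᵥ* (P ^ (i + 1))) j := by
      intro j
      simp only [Matrix.vecMul, dotProduct, hpdef, Finset.sum_mul]
      rw [Finset.sum_comm]
      refine Finset.sum_congr rfl fun i _ => ?_
      rw [pow_succ]
      simp only [Matrix.mul_apply, Finset.mul_sum]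
      conv_lhs => rw [Finset.sum_comm]
      exact Finset.sum_congr rfl fun a _ => Finset.sum_congr rfl fun b _ => by ring
    funext j
    rw [hswap j]
    have hshift : ∑ i ∈ Finset.range k, (w ᵥ* (P ^ (i + 1))) j
        = ∑ i ∈ Finset.range (k + 1), (w ᵥ* (P ^ i)) j - (w ᵥ* (P ^ 0)) j := by
      rw [Finset.sum_range_succ' (fun i => (w ᵥ* (P ^ i)) j) k]
      ring
    rw [hshift, Finset.sum_range_succ]
    have h0 : (w ᵥ* (P ^ 0)) j = w j := by simp
    have hk' : (w ᵥ* (P ^ k)) j = w j := by rw [← hQdef, hwQ]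
    rw [h0, hk']
    simp [hpdef]
  have hppow : ∀ m : ℕ, p ᵥ* (P ^ m) = p := by
    intro m
    induction m with
    | zero => simp
    | succ m ih => rw [pow_succ, ← Matrix.vecMul_vecMul, ih, hpP]
  have hpsum : ∑ j, p j = (k : ℝ) * ∑ i, w i := by
    simp only [hpdef]
    rw [Finset.sum_comm]
    have : ∀ i : ℕ, ∑ j, (w ᵥ* (P ^ i)) j = ∑ l, w l := by
      intro i
      simp only [Matrix.vecMul, dotProduct]
      rw [Finset.sum_comm]
      simp only [← Finset.mul_sum, pow_row_sum P hP1 i, mul_one]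
    simp [this]
  have hpsumpos : 0 < ∑ j, p j := by
    rw [hpsum]
    exact mul_pos (by exact_mod_cast hkpos) hwsumpos
  have hppos : ∀ j, 0 < p j := by
    intro j
    have h1 : p j = ∑ i, p i * Q i j := by
      have := congrFun (hppow k) j
      rw [← hQdef] at this
      simpa [Matrix.vecMul, dotProduct] using this.symm
    obtain ⟨i0, -, hi0⟩ : ∃ i ∈ Finset.univ, 0 < p i := by
      by_contra h
      push_neg at h
      have : ∑ i, p i ≤ 0 :=
        Finset.sum_nonpos fun i _ => h i (Finset.mem_univ i)
      linarith
    rw [h1]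
    exact Finset.sum_pos' (fun i _ => mul_nonneg (hpnonneg i) (hQpos i j).le)
      ⟨i0, Finset.mem_univ i0, mul_pos hi0 (hQpos i0 j)⟩
  -- normalize
  set c := ∑ j, p j with hcdef
  refine ⟨fun i => p i / c, fun i => div_pos (hppos i) hpsumpos, ?_, ?_⟩
  · show ∑ i, p i / c = 1
    rw [← Finset.sum_div, ← hcdef]
    field_simp
  · intro j
    have h1 : ∑ i, p i * P i j = p j := by
      have := congrFun hpP j
      simpa [Matrix.vecMul, dotProduct] using this
    show ∑ i, p i / c * P i j = p j / c
    have h2 : ∑ i, p i / c * P i j = (∑ i, p i * P i j) / c := by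
      rw [Finset.sum_div]
      exact Finset.sum_congr rfl fun i _ => by ring
    rw [h2, h1]

end CommuteTimeAux
open Matrix Finset CommuteTimeAux in
private theorem commute_times_realizable_aux {n : ℕ}
    (P : Matrix (Fin n) (Fin n) ℝ)
    (hP0 : ∀ i j, 0 ≤ P i j) (hP1 : ∀ i, ∑ j, P i j = 1)
    (herg : ∃ k : ℕ, ∀ i j, 0 < (P ^ k) i j)
    (M : Fin n → Fin n → ℝ)
    (hMdiag : ∀ b, M b b = 0)
    (hMstep : ∀ a b, a ≠ b → M a b = 1 + ∑ j, P a j * M j b)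
    (T : Fin n → Fin n → ℝ)
    (hT : ∀ a b, T a b = M a b + M b a)
    (hn : 0 < n) :
    ∃ (d : ℕ) (x : Fin n → EuclideanSpace ℝ (Fin d)),
      ∀ a b, ‖x a - x b‖ ^ 2 = T a b := by
  classical
  obtain ⟨π, hπpos, hπsum, hπstat⟩ := exists_stationary hn P hP0 hP1 herg
  obtain ⟨k, hk⟩ := herg
  have hQ1 : ∀ i, ∑ j, (P ^ k) i j = 1 := pow_row_sum P hP1 k
  set r : Fin n → ℝ := fun b => 1 + ∑ j, P b j * M j b with hrdef
  have key1 : ∀ a b, M a b - ∑ j, P a j * M j b = if a = b then 1 - r b else 1 := by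
    intro a b
    by_cases h : a = b
    · subst h
      rw [if_pos rfl, hMdiag]
      simp only [hrdef]
      ring
    · rw [if_neg h, hMstep a b h]; ring
  have key2 : ∀ b, π b * r b = 1 := by
    intro b
    have hL : ∑ a, π a * (M a b - ∑ j, P a j * M j b) = 0 := by
      have hswap : ∑ a, π a * ∑ j, P a j * M j b = ∑ a, π a * M a b := by
        simp only [Finset.mul_sum]
        rw [Finset.sum_comm]
        refine Finset.sum_congr rfl fun j _ => ?_
        have h1 : ∑ a, π a * (P a j * M j b) = (∑ a, π a * P a j) * M j b := by
          rw [Finset.sum_mul]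
          exact Finset.sum_congr rfl fun a _ => by ring
        rw [h1, hπstat j]
      simp only [mul_sub, Finset.sum_sub_distrib, hswap, sub_self]
    have hR : ∑ a, π a * (if a = b then 1 - r b else 1) = 1 - π b * r b := by
      have hsplit : ∀ a, π a * (if a = b then 1 - r b else 1)
          = π a - (if a = b then π a * r b else 0) := by
        intro a
        by_cases h : a = b
        · rw [if_pos h, if_pos h]; ring
        · rw [if_neg h, if_neg h]; ring
      simp only [hsplit]
      rw [Finset.sum_sub_distrib, hπsum, Finset.sum_ite_eq' Finset.univ b (fun a => π a * r b)]
      simp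
    have h1 : ∑ a, π a * (if a = b then 1 - r b else 1) = 0 := by
      calc ∑ a, π a * (if a = b then 1 - r b else 1)
          = ∑ a, π a * (M a b - ∑ j, P a j * M j b) :=
            Finset.sum_congr rfl fun a _ => by rw [key1]
        _ = 0 := hL
    rw [hR] at h1
    linarith
  -- the invertible "fundamental" matrix
  set A : Matrix (Fin n) (Fin n) ℝ := 1 - P + Matrix.of (fun _ j => π j) with hAdef
  have hAapp : ∀ i j, A i j = (if i = j then (1:ℝ) else 0) - P i j + π j := by
    intro i j
    simp [hAdef, Matrix.one_apply, Matrix.sub_apply, Matrix.add_apply]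
  have hAdet : A.det ≠ 0 := by
    intro hdet
    obtain ⟨v, hv0, hv⟩ := Matrix.exists_mulVec_eq_zero_iff.mpr hdet
    set c := ∑ j, π j * v j with hcdef
    have hvi : ∀ i, v i - (∑ j, P i j * v j) + c = 0 := by
      intro i
      have h1 := congrFun hv i
      simp only [Matrix.mulVec, dotProduct, Pi.zero_apply] at h1
      have h2 : ∑ j, A i j * v j = v i - (∑ j, P i j * v j) + c := by
        simp only [hAapp, sub_mul, add_mul, ite_mul, one_mul, zero_mul]
        rw [Finset.sum_add_distrib, Finset.sum_sub_distrib,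
          Finset.sum_ite_eq Finset.univ i (fun j => v j), hcdef]
        simp
      rw [← h2, h1]
    have hveq : ∀ i, v i = (∑ j, P i j * v j) - c := fun i => by linarith [hvi i]
    have hc0 : c = 0 := by
      have h4 : ∑ i, π i * v i = ∑ i, π i * ((∑ j, P i j * v j) - c) :=
        Finset.sum_congr rfl fun i _ => by rw [← hveq i]
      have h5 : ∑ i, π i * ((∑ j, P i j * v j) - c) = (∑ i, π i * ∑ j, P i j * v j) - c := by
        simp only [mul_sub, Finset.sum_sub_distrib, ← Finset.sum_mul, hπsum, one_mul]
      have h6 : ∑ i, π i * ∑ j, P i j * v j = c := by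
        simp only [Finset.mul_sum]
        rw [Finset.sum_comm, hcdef]
        refine Finset.sum_congr rfl fun j _ => ?_
        have h7 : ∑ i, π i * (P i j * v j) = (∑ i, π i * P i j) * v j := by
          rw [Finset.sum_mul]; exact Finset.sum_congr rfl fun i _ => by ring
        rw [h7, hπstat j]
      have h8 : c = c - c := by
        calc c = ∑ i, π i * v i := hcdef
          _ = ∑ i, π i * ((∑ j, P i j * v j) - c) := h4
          _ = (∑ i, π i * ∑ j, P i j * v j) - c := h5
          _ = c - c := by rw [h6]
      linarith
    have hPv : ∀ i, ∑ j, P i j * v j = v i := by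
      intro i
      have := hvi i
      rw [hc0] at this
      linarith
    have hpow : ∀ (m : ℕ) (i : Fin n), ∑ j, (P ^ m) i j * v j = v i := by
      intro m
      induction m with
      | zero => intro i; simp [Matrix.one_apply]
      | succ m ih =>
        intro i
        rw [pow_succ']
        simp only [Matrix.mul_apply, Finset.sum_mul]
        rw [Finset.sum_comm]
        have h9 : ∀ l, ∑ j, P i l * (P ^ m) l j * v j = P i l * v l := by
          intro l
          calc ∑ j, P i l * (P ^ m) l j * v j = P i l * ∑ j, (P ^ m) l j * v j := by
                rw [Finset.mul_sum]; exact Finset.sum_congr rfl fun j _ => by ring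
            _ = P i l * v l := by rw [ih l]
        simp only [h9]
        exact hPv i
    have hconst := const_of_fixed hn (P ^ k) hk hQ1 v (fun i => hpow k i)
    apply hv0
    funext i
    show v i = 0
    have hvi0 : v i = c := by
      calc v i = (∑ j, π j) * v i := by rw [hπsum, one_mul]
        _ = ∑ j, π j * v i := by rw [Finset.sum_mul]
        _ = ∑ j, π j * v j := Finset.sum_congr rfl fun j _ => by rw [hconst i j]
        _ = c := hcdef.symm
    rw [hvi0, hc0]
  have hATdet : IsUnit (Aᵀ).det := by
    rw [Matrix.det_transpose]
    exact isUnit_iff_ne_zero.mpr hAdet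
  -- conditional negative definiteness of M (and hence T)
  have cnd : ∀ x : Fin n → ℝ, (∑ i, x i) = 0 → ∑ a, ∑ b, x a * M a b * x b ≤ 0 := by
    intro x hx
    set u : Fin n → ℝ := (Aᵀ)⁻¹ *ᵥ x with hudef
    have hux : Aᵀ *ᵥ u = x := by
      rw [hudef, Matrix.mulVec_mulVec, Matrix.mul_nonsing_inv _ hATdet, Matrix.one_mulVec]
    have hxb0 : ∀ b, x b = u b - (∑ i, P i b * u i) + π b * (∑ i, u i) := by
      intro b
      have h1 : (Aᵀ *ᵥ u) b = ∑ i, ((if i = b then (1:ℝ) else 0) - P i b + π b) * u i := by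
        simp only [Matrix.mulVec, dotProduct, Matrix.transpose_apply]
        exact Finset.sum_congr rfl fun i _ => by rw [hAapp]
      have h2 : ∑ i, ((if i = b then (1:ℝ) else 0) - P i b + π b) * u i
          = u b - (∑ i, P i b * u i) + π b * (∑ i, u i) := by
        simp only [sub_mul, add_mul, ite_mul, one_mul, zero_mul]
        rw [Finset.sum_add_distrib, Finset.sum_sub_distrib, Finset.sum_ite_eq' Finset.univ b u,
          ← Finset.mul_sum]
        simp
      rw [← hux]
      rw [h1, h2]
    have hs : ∑ i, u i = 0 := by
      have h1 : ∑ b, x b = ∑ b, (u b - (∑ i, P i b * u i) + π b * (∑ i, u i)) :=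
        Finset.sum_congr rfl fun b _ => hxb0 b
      have h2 : ∑ b, ∑ i, P i b * u i = ∑ i, u i := by
        rw [Finset.sum_comm]
        refine Finset.sum_congr rfl fun i _ => ?_
        rw [← Finset.sum_mul, hP1 i, one_mul]
      have h3 : ∑ b, π b * (∑ i, u i) = ∑ i, u i := by
        rw [← Finset.sum_mul, hπsum, one_mul]
      rw [Finset.sum_add_distrib, Finset.sum_sub_distrib, h2, h3, hx] at h1
      linarith
    have hxb : ∀ b, x b = u b - ∑ i, P i b * u i := by
      intro b
      rw [hxb0 b, hs]
      ring
    have inner : ∀ b, ∑ a, x a * M a b = -(r b * u b) := by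
      intro b
      have h2 : ∑ a, (∑ i, P i a * u i) * M a b = ∑ a, u a * ∑ j, P a j * M j b := by
        simp only [Finset.sum_mul, Finset.mul_sum]
        rw [Finset.sum_comm]
        exact Finset.sum_congr rfl fun i _ => Finset.sum_congr rfl fun a _ => by ring
      calc ∑ a, x a * M a b
          = ∑ a, (u a - ∑ i, P i a * u i) * M a b :=
            Finset.sum_congr rfl fun a _ => by rw [hxb a]
        _ = ∑ a, u a * M a b - ∑ a, (∑ i, P i a * u i) * M a b := by
            simp only [sub_mul, Finset.sum_sub_distrib]
        _ = ∑ a, u a * M a b - ∑ a, u a * ∑ j, P a j * M j b := by rw [h2]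
        _ = ∑ a, u a * (M a b - ∑ j, P a j * M j b) := by
            simp only [mul_sub, Finset.sum_sub_distrib]
        _ = ∑ a, u a * (if a = b then 1 - r b else 1) :=
            Finset.sum_congr rfl fun a _ => by rw [key1]
        _ = -(r b * u b) := by
            have hsplit : ∀ a, u a * (if a = b then 1 - r b else 1)
                = u a - (if a = b then u a * r b else 0) := by
              intro a
              by_cases h : a = b
              · rw [if_pos h, if_pos h]; ring
              · rw [if_neg h, if_neg h]; ring
            simp only [hsplit]
            rw [Finset.sum_sub_distrib, hs,
              Finset.sum_ite_eq' Finset.univ b (fun a => u a * r b)]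
            simp only [Finset.mem_univ, if_true]
            ring
    have hrpi : ∀ b, r b = (π b)⁻¹ := fun b =>
      eq_inv_of_mul_eq_one_left (by rw [mul_comm]; exact key2 b)
    set W : Fin n → ℝ := fun i => u i / π i with hWdef
    have hu_eq : ∀ i, u i = π i * W i := by
      intro i
      have hne : π i ≠ 0 := (hπpos i).ne'
      rw [hWdef]
      show u i = π i * (u i / π i)
      field_simp
    have hterm : ∀ b i, r b * u b * (P i b * u i) = π i * P i b * (W i * W b) := by
      intro b i
      have hbne : π b ≠ 0 := (hπpos b).ne'
      rw [hrpi b, hu_eq b, hu_eq i]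
      field_simp
    have hterm2 : ∀ b, r b * u b ^ 2 = π b * W b ^ 2 := by
      intro b
      have hbne : π b ≠ 0 := (hπpos b).ne'
      rw [hrpi b, hu_eq b]
      field_simp
    have main : ∑ b, ∑ i, r b * u b * (P i b * u i) ≤ ∑ b, r b * u b ^ 2 := by
      have step1 : ∑ b, ∑ i, r b * u b * (P i b * u i)
          = ∑ b, ∑ i, π i * P i b * (W i * W b) :=
        Finset.sum_congr rfl fun b _ => Finset.sum_congr rfl fun i _ => hterm b i
      have step2 : ∑ b, ∑ i, π i * P i b * (W i * W b)
          ≤ ∑ b, ∑ i, π i * P i b * ((W i ^ 2 + W b ^ 2) / 2) := by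
        refine Finset.sum_le_sum fun b _ => Finset.sum_le_sum fun i _ => ?_
        have h1 : 0 ≤ π i * P i b := mul_nonneg (hπpos i).le (hP0 i b)
        have h2 : W i * W b ≤ (W i ^ 2 + W b ^ 2) / 2 := by nlinarith [sq_nonneg (W i - W b)]
        exact mul_le_mul_of_nonneg_left h2 h1
      have step3 : ∑ b, ∑ i, π i * P i b * ((W i ^ 2 + W b ^ 2) / 2)
          = ∑ b, π b * W b ^ 2 := by
        have hsplit : ∀ (b i : Fin n), π i * P i b * ((W i ^ 2 + W b ^ 2) / 2)
            = π i * P i b * W i ^ 2 / 2 + π i * P i b * W b ^ 2 / 2 := by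
          intro b i; ring
        simp only [hsplit, Finset.sum_add_distrib]
        have hA1 : ∑ b, ∑ i, π i * P i b * W i ^ 2 / 2 = (∑ i, π i * W i ^ 2) / 2 := by
          rw [Finset.sum_comm, Finset.sum_div]
          refine Finset.sum_congr rfl fun i _ => ?_
          rw [← Finset.sum_div]
          congr 1
          calc ∑ b, π i * P i b * W i ^ 2 = (π i * W i ^ 2) * ∑ b, P i b := by
                rw [Finset.mul_sum]; exact Finset.sum_congr rfl fun b _ => by ring
            _ = π i * W i ^ 2 := by rw [hP1 i, mul_one]
        have hA2 : ∑ b, ∑ i, π i * P i b * W b ^ 2 / 2 = (∑ b, π b * W b ^ 2) / 2 := by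
          rw [Finset.sum_div]
          refine Finset.sum_congr rfl fun b _ => ?_
          rw [← Finset.sum_div]
          congr 1
          calc ∑ i, π i * P i b * W b ^ 2 = (∑ i, π i * P i b) * W b ^ 2 := by
                rw [Finset.sum_mul]
            _ = π b * W b ^ 2 := by rw [hπstat b]
        rw [hA1, hA2]
        ring
      have step4 : ∑ b, r b * u b ^ 2 = ∑ b, π b * W b ^ 2 :=
        Finset.sum_congr rfl fun b _ => hterm2 b
      rw [step1, step4]
      exact le_trans step2 (le_of_eq step3)
    calc ∑ a, ∑ b, x a * M a b * x b
        = ∑ b, (∑ a, x a * M a b) * x b := by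
          rw [Finset.sum_comm]
          exact Finset.sum_congr rfl fun b _ => by rw [Finset.sum_mul]
      _ = ∑ b, -(r b * u b) * x b :=
          Finset.sum_congr rfl fun b _ => by rw [inner b]
      _ = (∑ b, ∑ i, r b * u b * (P i b * u i)) - ∑ b, r b * u b ^ 2 := by
          have h10 : ∀ b, -(r b * u b) * x b
              = (∑ i, r b * u b * (P i b * u i)) - r b * u b ^ 2 := by
            intro b
            have h11 : ∑ i, r b * u b * (P i b * u i) = r b * u b * ∑ i, P i b * u i := by
              rw [Finset.mul_sum]
            rw [hxb b, h11]
            ring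
          simp only [h10, Finset.sum_sub_distrib]
      _ ≤ 0 := by linarith [main]
  have hTsym : ∀ a b, T a b = T b a := by intro a b; rw [hT, hT]; ring
  have hTdiag : ∀ a, T a a = 0 := by intro a; rw [hT, hMdiag]; ring
  have cndT : ∀ x : Fin n → ℝ, (∑ i, x i) = 0 → ∑ a, ∑ b, x a * T a b * x b ≤ 0 := by
    intro x hx
    have h1 : ∑ a, ∑ b, x a * T a b * x b
        = (∑ a, ∑ b, x a * M a b * x b) + ∑ a, ∑ b, x a * M b a * x b := by
      simp only [hT, mul_add, add_mul, Finset.sum_add_distrib]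
    have h2 : ∑ a, ∑ b, x a * M b a * x b = ∑ a, ∑ b, x a * M a b * x b := by
      rw [Finset.sum_comm]
      exact Finset.sum_congr rfl fun a _ => Finset.sum_congr rfl fun b _ => by ring
    rw [h1, h2]
    have := cnd x hx
    linarith
  -- the centered Gram matrix
  have hn0 : (n : ℝ) ≠ 0 := Nat.cast_ne_zero.mpr hn.ne'
  set c0 : ℝ := (n : ℝ)⁻¹ with hc0def
  set Tm : Matrix (Fin n) (Fin n) ℝ := Matrix.of T with hTmdef
  set C : Matrix (Fin n) (Fin n) ℝ :=
    Matrix.of (fun i j => (if i = j then (1:ℝ) else 0) - c0) with hCdef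
  have hCapp : ∀ i j, C i j = (if i = j then (1:ℝ) else 0) - c0 := fun i j => rfl
  have hCT : ∀ a b, (C * Tm) a b = T a b - c0 * ∑ i, T i b := by
    intro a b
    rw [Matrix.mul_apply]
    simp only [hCapp, hTmdef, Matrix.of_apply, sub_mul, ite_mul, one_mul, zero_mul]
    rw [Finset.sum_sub_distrib, Finset.sum_ite_eq Finset.univ a (fun l => T l b),
      ← Finset.mul_sum]
    simp
  have hE : ∀ a b, (C * Tm * C) a b
      = T a b - c0 * (∑ i, T i b) - c0 * (∑ j, T a j) + c0 * (c0 * ∑ i, ∑ j, T i j) := by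
    intro a b
    rw [Matrix.mul_apply]
    simp only [hCapp, mul_sub, mul_ite, mul_one, mul_zero]
    rw [Finset.sum_sub_distrib, Finset.sum_ite_eq' Finset.univ b (fun l => (C * Tm) a l),
      ← Finset.sum_mul]
    simp only [Finset.mem_univ, if_true]
    rw [hCT a b]
    have h1 : ∑ l, (C * Tm) a l = (∑ j, T a j) - c0 * ∑ i, ∑ j, T i j := by
      simp only [hCT]
      rw [Finset.sum_sub_distrib, ← Finset.mul_sum]
      congr 1
      rw [Finset.sum_comm]
    rw [h1]
    ring
  have hRC : ∀ x, ∑ i, T i x = ∑ j, T x j :=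
    fun x => Finset.sum_congr rfl fun i _ => hTsym i x
  set G : Matrix (Fin n) (Fin n) ℝ := (-(2:ℝ))⁻¹ • (C * Tm * C) with hGdef
  have hGapp : ∀ a b, G a b = (-(2:ℝ))⁻¹ * (C * Tm * C) a b := by
    intro a b
    rw [hGdef]
    simp [Matrix.smul_apply]
  have hCsym : Cᵀ = C := by
    ext i j
    rw [Matrix.transpose_apply, hCapp, hCapp]
    by_cases h : i = j
    · subst h; rfl
    · rw [if_neg h, if_neg (fun hh => h hh.symm)]
  have hG : G.PosSemidef := by
    refine Matrix.PosSemidef.of_dotProduct_mulVec_nonneg ?_ ?_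
    · show Gᴴ = G
      ext i j
      rw [Matrix.conjTranspose_apply, star_trivial]
      rw [hGapp, hGapp, hE, hE, hRC i, hRC j, hTsym j i]
      ring
    · intro x
      have hsx : star x = x := rfl
      set y : Fin n → ℝ := C *ᵥ x with hydef
      have hy : ∀ i, y i = x i - c0 * ∑ j, x j := by
        intro i
        rw [hydef]
        show ∑ j, C i j * x j = x i - c0 * ∑ j, x j
        simp only [hCapp, sub_mul, ite_mul, one_mul, zero_mul]
        rw [Finset.sum_sub_distrib, Finset.sum_ite_eq Finset.univ i x, ← Finset.mul_sum]
        simp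
      have hysum : ∑ i, y i = 0 := by
        have h1 : ∑ i, y i = ∑ i, (x i - c0 * ∑ j, x j) := Finset.sum_congr rfl fun i _ => hy i
        rw [h1, Finset.sum_sub_distrib, Finset.sum_const, Finset.card_univ, Fintype.card_fin,
          nsmul_eq_mul, hc0def]
        have h2 : (n:ℝ) * ((n:ℝ)⁻¹ * ∑ j, x j) = ∑ j, x j := by
          rw [← mul_assoc, mul_inv_cancel₀ hn0, one_mul]
        rw [h2, sub_self]
      have hxvC : x ᵥ* C = y := by
        rw [← hCsym, Matrix.vecMul_transpose, hydef]
      have hquad : y ⬝ᵥ (Tm *ᵥ y) = ∑ a, ∑ b, y a * T a b * y b := by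
        simp only [dotProduct, Matrix.mulVec, hTmdef, Matrix.of_apply, Finset.mul_sum]
        exact Finset.sum_congr rfl fun a _ => Finset.sum_congr rfl fun b _ => by ring
      have hform : star x ⬝ᵥ G *ᵥ x = (-(2:ℝ))⁻¹ * ∑ a, ∑ b, y a * T a b * y b := by
        rw [hsx, hGdef, Matrix.smul_mulVec, dotProduct_smul,
          ← Matrix.mulVec_mulVec, ← Matrix.mulVec_mulVec, dotProduct_mulVec, hxvC,
          ← hydef, hquad]
        simp [smul_eq_mul]
      rw [hform]
      have hle0 := cndT y hysum
      nlinarith [hle0]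
  obtain ⟨B, hB⟩ : ∃ B : Matrix (Fin n) (Fin n) ℝ, G = Bᴴ * B := by
    open scoped MatrixOrder Matrix.Norms.L2Operator in
    exact CStarAlgebra.nonneg_iff_eq_star_mul_self.mp hG.nonneg
  have hGram : ∀ a b, ∑ i, B i a * B i b = G a b := by
    intro a b
    rw [hB, Matrix.mul_apply]
    exact Finset.sum_congr rfl fun i _ => by
      rw [Matrix.conjTranspose_apply, star_trivial]
  set f : Fin n → EuclideanSpace ℝ (Fin n) :=
    fun a => (WithLp.equiv 2 (Fin n → ℝ)).symm (fun i => B i a) with hfdef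
  refine ⟨n, f, ?_⟩
  intro a b
  have hsub : ∀ i, (f a - f b) i = B i a - B i b := fun i => rfl
  rw [EuclideanSpace.norm_eq]
  rw [Real.sq_sqrt (Finset.sum_nonneg fun i _ => sq_nonneg _)]
  have h1 : ∑ i, ‖(f a - f b) i‖ ^ 2 = ∑ i, (B i a - B i b) ^ 2 := by
    refine Finset.sum_congr rfl fun i _ => ?_
    rw [hsub i, Real.norm_eq_abs, sq_abs]
  rw [h1]
  have h2 : ∑ i, (B i a - B i b) ^ 2
      = ((∑ i, B i a * B i a) + ∑ i, B i b * B i b) - 2 * ∑ i, B i a * B i b := by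
    rw [Finset.mul_sum, ← Finset.sum_add_distrib, ← Finset.sum_sub_distrib]
    exact Finset.sum_congr rfl fun i _ => by ring
  rw [h2, hGram a a, hGram b b, hGram a b]
  rw [hGapp a a, hGapp b b, hGapp a b, hE a a, hE b b, hE a b, hTdiag a, hTdiag b,
    hRC a, hRC b]
  ring


/-- The matrix of commuting times of an ergodic finite Markov chain is
realizable as squared Euclidean distances. -/
theorem commute_times_realizable {n : ℕ}
    (P : Matrix (Fin n) (Fin n) ℝ)
    (hP0 : ∀ i j, 0 ≤ P i j) (hP1 : ∀ i, ∑ j, P i j = 1)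
    (herg : ∃ k : ℕ, ∀ i j, 0 < (P ^ k) i j)
    (M : Fin n → Fin n → ℝ)
    (hMdiag : ∀ b, M b b = 0)
    (hMstep : ∀ a b, a ≠ b → M a b = 1 + ∑ j, P a j * M j b)
    (T : Fin n → Fin n → ℝ)
    (hT : ∀ a b, T a b = M a b + M b a) :
    ∃ (d : ℕ) (x : Fin n → EuclideanSpace ℝ (Fin d)),
      ∀ a b, ‖x a - x b‖ ^ 2 = T a b := by
  rcases Nat.eq_zero_or_pos n with hn | hn
  · subst hn
    exact ⟨0, fun _ => 0, fun a => a.elim0⟩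
  · exact commute_times_realizable_aux P hP0 hP1 herg M hMdiag hMstep T hT hn
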